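/- For all real numbers s, r, t with 0 ≤ r ≤ r + s ≤ t, we have log⁺(r+s) − ((t−(r+s))/(t−r))·log⁺ r − (s/(t−r))·log⁺ t ≥ −1, where log⁺ x = log(max(x,1)). -/

import Mathlib

open Real

/-- `log⁺ x = log (max x 1)`. -/
noncomputable def logPlus (x : ℝ) : ℝ := Real.log (max x 1)

lemma logPlus_nonneg (x : ℝ) : 0 ≤ logPlus x :=
  Real.log_nonneg (le_max_right _ _)

lemma logPlus_of_le_one {x : ℝ} (h : x ≤ 1) : logPlus x = 0 := by
  rw [logPlus, max_eq_right h, Real.log_one]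

lemma logPlus_of_one_le {x : ℝ} (h : 1 ≤ x) : logPlus x = Real.log x := by
  rw [logPlus, max_eq_left h]

/-- tangent line inequality multiplied through: `c * (log x - log c) ≤ x - c`. -/
lemma log_tangent {x c : ℝ} (hx : 0 < x) (hc : 0 < c) :
    c * (Real.log x - Real.log c) ≤ x - c := by
  have h := Real.log_le_sub_one_of_pos (show 0 < x / c by positivity)
  rw [Real.log_div hx.ne' hc.ne'] at h
  have h2 := mul_le_mul_of_nonneg_left h hc.le
  have h3 : c * (x / c - 1) = x - c := by field_simp
  linarith [h2, h3.le, h3.ge]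

/-- Lower bound half of the elementary interpolation inequality for `log⁺`. -/
theorem logPlus_interpolation_lower_bound (s r t : ℝ)
    (hr : 0 ≤ r) (hs : r ≤ r + s) (ht : r + s ≤ t) :
    -1 ≤ logPlus (r + s) - ((t - (r + s)) / (t - r)) * logPlus r
        - (s / (t - r)) * logPlus t := by
  have hs0 : 0 ≤ s := by linarith
  rcases eq_or_lt_of_le (le_trans hs ht) with hrt | hrt
  · -- t = r, so s = 0 and all divisions are by zero
    have hD : t - r = 0 := by linarith
    simp [hD, div_zero]
    linarith [logPlus_nonneg (r + s)]
  · have hD : 0 < t - r := by linarith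
    by_cases ht1 : t ≤ 1
    · rw [logPlus_of_le_one (by linarith : r + s ≤ 1),
        logPlus_of_le_one (by linarith : r ≤ 1), logPlus_of_le_one ht1]
      norm_num
    · push_neg at ht1
      have ht0 : (0:ℝ) < t := by linarith
      have hlt0 : 0 ≤ Real.log t := Real.log_nonneg ht1.le
      have hlt1 : Real.log t ≤ t - 1 := Real.log_le_sub_one_of_pos ht0
      by_cases hr1 : 1 ≤ r
      · -- concavity case: 1 ≤ r ≤ r+s ≤ t
        have hc1 : (1:ℝ) ≤ r + s := by linarith
        have hc0 : (0:ℝ) < r + s := by linarith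
        have hr0 : (0:ℝ) < r := by linarith
        rw [logPlus_of_one_le hc1, logPlus_of_one_le hr1, logPlus_of_one_le ht1.le]
        have h1 := log_tangent hr0 hc0
        have h2 := log_tangent ht0 hc0
        have key : ((t - (r + s)) / (t - r)) * Real.log r + (s / (t - r)) * Real.log t
            ≤ Real.log (r + s) := by
          rw [div_mul_eq_mul_div, div_mul_eq_mul_div, ← add_div, div_le_iff₀ hD]
          nlinarith [mul_le_mul_of_nonneg_left h1 (show 0 ≤ t - (r + s) by linarith),
            mul_le_mul_of_nonneg_left h2 hs0, hc0]
        linarith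
      · push_neg at hr1
        rw [logPlus_of_le_one hr1.le, mul_zero, sub_zero, logPlus_of_one_le ht1.le]
        by_cases hc1 : r + s ≤ 1
        · rw [logPlus_of_le_one hc1]
          have : s / (t - r) * Real.log t ≤ 1 := by
            rw [div_mul_eq_mul_div, div_le_one hD]
            nlinarith
          linarith
        · push_neg at hc1
          have hc0 : (0:ℝ) < r + s := by linarith
          rw [logPlus_of_one_le hc1.le]
          have hlc0 : 0 ≤ Real.log (r + s) := Real.log_nonneg hc1.le
          have h2 := log_tangent ht0 hc0
          have key : s / (t - r) * Real.log t ≤ Real.log (r + s) + 1 := by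
            rw [div_mul_eq_mul_div, div_le_iff₀ hD]
            nlinarith [mul_le_mul_of_nonneg_left h2 hs0,
              mul_nonneg (mul_nonneg (show (0:ℝ) ≤ t - r - s by linarith) hlc0) hc0.le,
              mul_nonneg hr (show (0:ℝ) ≤ t - (r + s) by linarith),
              mul_nonneg hs0 hc0.le]
          linarith
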